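/- arXiv:2602.21827 — 3 statements merged into one kernel-verified Lean document; each statement's English description precedes it below -/
import Mathlib

section
/- Consider an ALG-schedule and a time u at which Cl(u) ≠ ∅ and min_{j∈Cl(u)} p_j(u) ≤ ((1−α)/α)·min_{j∈N(u)} y_j(u) (a minimum over the empty set being +∞). Then the job k processed at time u satisfies k ∈ Cl(u) and p_k(u) ≤ p_j(u) for every j ∈ A(u); that is, the algorithm processes a job with shortest remaining processing time among all available jobs. -/
open MeasureTheory Set

open scoped Classical

noncomputable section

variable {J : Type*}

/-- Total work done on job `j` by time `u` under the schedule `σ`. -/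
def workDone (σ : ℝ → J → ℝ) (j : J) (u : ℝ) : ℝ := ∫ v in (0:ℝ)..u, σ v j

/-- Remaining processing time of job `j` at time `u`. -/
def remT (p : J → ℝ) (σ : ℝ → J → ℝ) (j : J) (u : ℝ) : ℝ := p j - workDone σ j u

/-- Completion time of job `j`: the least `u` with `workDone σ j u = p j`,
    and `⊤` if the job never completes. -/
def cTime (p : J → ℝ) (σ : ℝ → J → ℝ) (j : J) : EReal :=
  sInf ((fun v : ℝ => (v : EReal)) '' {v : ℝ | workDone σ j v = p j})

/-- Job `j` is available at time `u`: released and not yet completed. -/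
def availAt (r p : J → ℝ) (σ : ℝ → J → ℝ) (u : ℝ) (j : J) : Prop :=
  r j ≤ u ∧ (u : EReal) < cTime p σ j

/-- Job `j` is processed at time `u`. -/
def procAt (σ : ℝ → J → ℝ) (u : ℝ) (j : J) : Prop := 0 < σ u j

/-- Job `j` is non-clairvoyant at time `u`. -/
def ncAt (r p : J → ℝ) (α : ℝ) (σ : ℝ → J → ℝ) (u : ℝ) (j : J) : Prop :=
  availAt r p σ u j ∧ workDone σ j u ≤ α * p j

/-- Job `j` is clairvoyant at time `u`. -/
def clAt (r p : J → ℝ) (α : ℝ) (σ : ℝ → J → ℝ) (u : ℝ) (j : J) : Prop :=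
  availAt r p σ u j ∧ α * p j < workDone σ j u

/-- The time at which job `j` emits its signal: the least `u` with
    `workDone σ j u = α * p j`. -/
def emitT (p : J → ℝ) (α : ℝ) (σ : ℝ → J → ℝ) (j : J) : ℝ :=
  sInf {u : ℝ | workDone σ j u = α * p j}

/-- Data of an instance: nonnegative release dates, positive processing times
    and `α ∈ (0,1)`. -/
structure IsInstance (r p : J → ℝ) (α : ℝ) : Prop where
  r_nonneg : ∀ j, 0 ≤ r j
  p_pos : ∀ j, 0 < p j
  alpha_mem : α ∈ Set.Ioo (0 : ℝ) 1

/-- `σ` is a (feasible, preemptive, single machine) schedule. -/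
structure IsSchedule [Fintype J] (r p : J → ℝ) (σ : ℝ → J → ℝ) : Prop where
  meas : ∀ j, Measurable fun u => σ u j
  nonneg : ∀ u j, 0 ≤ σ u j
  sum_le_one : ∀ u, ∑ j, σ u j ≤ 1
  zero_before_release : ∀ u j, u < r j → σ u j = 0
  workDone_le : ∀ u j, workDone σ j u ≤ p j

/-- A schedule is non-idling if it uses the full machine capacity whenever
    some job is available. -/
def NonIdling [Fintype J] (r p : J → ℝ) (σ : ℝ → J → ℝ) : Prop :=
  ∀ u, (∃ j, availAt r p σ u j) → ∑ j, σ u j = 1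

/-- The SRPT condition at time `u`: `Cl(u) ≠ ∅` and
    `min_{j ∈ Cl(u)} p_j(u) ≤ ((1-α)/α) · min_{j ∈ N(u)} y_j(u)`
    (the minimum over the empty set being `+∞`). -/
def SrptCond (r p : J → ℝ) (α : ℝ) (σ : ℝ → J → ℝ) (u : ℝ) : Prop :=
  ∃ k, clAt r p α σ u k ∧
    ∀ j, ncAt r p α σ u j → remT p σ k u ≤ ((1 - α) / α) * workDone σ j u

/-- `k` is a clairvoyant job of minimal remaining processing time at `u`,
    emitting last among those. -/
def IsSrptChoice (r p : J → ℝ) (α : ℝ) (σ : ℝ → J → ℝ) (u : ℝ) (k : J) : Prop :=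
  clAt r p α σ u k ∧
    (∀ j, clAt r p α σ u j → remT p σ k u ≤ remT p σ j u) ∧
    (∀ j, clAt r p α σ u j → remT p σ j u = remT p σ k u →
      emitT p α σ j ≤ emitT p α σ k)

/-- `j` is a non-clairvoyant job with minimal progress at time `u`. -/
def IsMinNc (r p : J → ℝ) (α : ℝ) (σ : ℝ → J → ℝ) (u : ℝ) (j : J) : Prop :=
  ncAt r p α σ u j ∧ ∀ j', ncAt r p α σ u j' → workDone σ j u ≤ workDone σ j' u

/-- `σ` is an ALG-schedule: non-idling, and at any time with available jobs it
    either runs a single clairvoyant job of shortest remaining processing time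
    (breaking ties by latest emission) when the SRPT condition holds, or it runs
    exactly the non-clairvoyant jobs of minimal progress at equal rates. -/
structure IsALG [Fintype J] (r p : J → ℝ) (α : ℝ) (σ : ℝ → J → ℝ) : Prop where
  sched : IsSchedule r p σ
  nonidling : NonIdling r p σ
  srpt_branch : ∀ u, (∃ j, availAt r p σ u j) → SrptCond r p α σ u →
    ∃ k, IsSrptChoice r p α σ u k ∧ ∀ j, j ≠ k → σ u j = 0
  setf_branch : ∀ u, (∃ j, availAt r p σ u j) → ¬ SrptCond r p α σ u →
    (∀ j, procAt σ u j → IsMinNc r p α σ u j) ∧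
    (∀ j j', IsMinNc r p α σ u j → IsMinNc r p α σ u j' → σ u j = σ u j')

/-- Right endpoint `min (C_j, t)` of the lifetime of `j` w.r.t. reference time `t`. -/
def lifeEnd (p : J → ℝ) (σ : ℝ → J → ℝ) (t : ℝ) (j : J) : ℝ :=
  (min (cTime p σ j) (t : EReal)).toReal

/-- The lifetime `I_j = [r j, min (C_j, t)]` of job `j`. -/
def lifetime (r p : J → ℝ) (σ : ℝ → J → ℝ) (t : ℝ) (j : J) : Set ℝ :=
  Set.Icc (r j) (lifeEnd p σ t j)

/-- `E_N`-edge of the borrow graph: `i` is processed at some time of `I_j`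
    while being non-clairvoyant. -/
def ENedge (r p : J → ℝ) (α : ℝ) (σ : ℝ → J → ℝ) (t : ℝ) (j i : J) : Prop :=
  ∃ u ∈ lifetime r p σ t j, procAt σ u i ∧ ncAt r p α σ u i

/-- `E_C`-edge of the borrow graph: `i` is processed at some time of `I_j`
    while being clairvoyant. -/
def ECedge (r p : J → ℝ) (α : ℝ) (σ : ℝ → J → ℝ) (t : ℝ) (j i : J) : Prop :=
  ∃ u ∈ lifetime r p σ t j, procAt σ u i ∧ clAt r p α σ u i

/-- Edge of the borrow graph `G_B`. -/
def borrowEdge (r p : J → ℝ) (α : ℝ) (σ : ℝ → J → ℝ) (t : ℝ) (j i : J) : Prop :=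
  ENedge r p α σ t j i ∨ ECedge r p α σ t j i

/-- `reaches j i` iff `i ∈ R_j`, i.e. `i` is reachable from `j` in the borrow
    graph (`j` itself included). -/
def reaches (r p : J → ℝ) (α : ℝ) (σ : ℝ → J → ℝ) (t : ℝ) : J → J → Prop :=
  Relation.ReflTransGen (borrowEdge r p α σ t)

/-- Truncated progress `ȳ_j = min (y_j(t), α p_j)`. -/
def truncY (p : J → ℝ) (α : ℝ) (σ : ℝ → J → ℝ) (t : ℝ) (j : J) : ℝ :=
  min (workDone σ j t) (α * p j)

end

/-- If at time `u` the SRPT condition holds (in particular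
`Cl(u) ≠ ∅`), then the job `k` processed at `u` is clairvoyant and has shortest
remaining processing time among all available jobs. -/
theorem stmt0 {J : Type*} [Fintype J] {r p : J → ℝ} {α : ℝ} {σ : ℝ → J → ℝ}
    (hinst : IsInstance r p α) (halg : IsALG r p α σ) (u : ℝ)
    (hcl : ∃ j, clAt r p α σ u j) (hcond : SrptCond r p α σ u)
    (k : J) (hk : procAt σ u k) :
    clAt r p α σ u k ∧ ∀ j, availAt r p σ u j → remT p σ k u ≤ remT p σ j u := by
  obtain ⟨j0, hj0⟩ := hcl
  have havail : ∃ j, availAt r p σ u j := ⟨j0, hj0.1⟩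
  obtain ⟨k', hk', hzero⟩ := halg.srpt_branch u havail hcond
  have hkk' : k = k' := by
    by_contra h
    have := hzero k h
    simp [procAt, this] at hk
  subst hkk'
  refine ⟨hk'.1, ?_⟩
  intro j hj
  by_cases hjc : α * p j < workDone σ j u
  · exact hk'.2.1 j ⟨hj, hjc⟩
  · have hjn : ncAt r p α σ u j := ⟨hj, le_of_not_gt hjc⟩
    obtain ⟨k0, hk0cl, hk0⟩ := hcond
    have h1 : remT p σ k u ≤ remT p σ k0 u := hk'.2.1 k0 hk0cl
    have h2 := hk0 j hjn
    have hα := hinst.alpha_mem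
    have h3 : ((1 - α) / α) * workDone σ j u ≤ (1 - α) * p j := by
      have hy : workDone σ j u ≤ α * p j := hjn.2
      have : ((1 - α) / α) * workDone σ j u ≤ ((1 - α) / α) * (α * p j) := by
        apply mul_le_mul_of_nonneg_left hy
        apply div_nonneg (by linarith [hα.2]) (le_of_lt hα.1)
      calc ((1 - α) / α) * workDone σ j u ≤ ((1 - α) / α) * (α * p j) := this
        _ = (1 - α) * p j := by
          have hα0 : α ≠ 0 := ne_of_gt hα.1
          field_simp
    have h4 : (1 - α) * p j ≤ remT p σ j u := by
      have hy : workDone σ j u ≤ α * p j := hjn.2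
      simp only [remT]
      linarith
    linarith
end

section
/- (Catch-Up) Consider an ALG-schedule. If job i is processed at a time u' and j, i ∈ N(u'), then y_j(u'') ≥ y_i(u'') for all times u'' ≥ u' such that j, i ∈ N(u''). -/
open MeasureTheory Set

open scoped Classical

section Helpers


variable {J : Type*} [Fintype J] {r p : J → ℝ} {α : ℝ} {σ : ℝ → J → ℝ}

lemma sigma_le_one (hs : IsSchedule r p σ) (u : ℝ) (j : J) : σ u j ≤ 1 :=
  le_trans (Finset.single_le_sum (fun k _ => hs.nonneg u k) (Finset.mem_univ j)) (hs.sum_le_one u)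

lemma intInt (hs : IsSchedule r p σ) (j : J) (a b : ℝ) :
    IntervalIntegrable (fun u => σ u j) volume a b := by
  refine (intervalIntegrable_const (c := (1:ℝ))).mono_fun'
    ((hs.meas j).aestronglyMeasurable.restrict) ?_
  filter_upwards with x
  rw [Real.norm_eq_abs, abs_of_nonneg (hs.nonneg x j)]
  exact sigma_le_one hs x j

lemma workDone_sub (hs : IsSchedule r p σ) (j : J) (a b : ℝ) :
    workDone σ j b - workDone σ j a = ∫ v in a..b, σ v j := by
  have h := intervalIntegral.integral_add_adjacent_intervals
    (intInt hs j 0 a) (intInt hs j a b)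
  unfold workDone
  linarith

lemma workDone_mono (hs : IsSchedule r p σ) (j : J) {a b : ℝ} (hab : a ≤ b) :
    workDone σ j a ≤ workDone σ j b := by
  have h := workDone_sub hs j a b
  have : (0:ℝ) ≤ ∫ v in a..b, σ v j :=
    intervalIntegral.integral_nonneg hab (fun u _ => hs.nonneg u j)
  linarith

lemma workDone_cont (hs : IsSchedule r p σ) (j : J) :
    Continuous (workDone σ j) :=
  intervalIntegral.continuous_primitive (intInt hs j) 0

/-- Key pointwise lemma: if both `i` and `j` are non-clairvoyant at `v` and
`i` is processed at `v`, then `y_i(v) ≤ y_j(v)`. -/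
lemma key (halg : IsALG r p α σ) {v : ℝ} {i j : J}
    (hiproc : procAt σ v i) (hjN : ncAt r p α σ v j) (hiN : ncAt r p α σ v i) :
    workDone σ i v ≤ workDone σ j v := by
  have hav : ∃ k, availAt r p σ v k := ⟨i, hiN.1⟩
  by_cases hsr : SrptCond r p α σ v
  · obtain ⟨k, hk, hz⟩ := halg.srpt_branch v hav hsr
    have hik : i ≠ k := by
      intro h; subst h
      exact absurd hiN.2 (not_le.mpr hk.1.2)
    exact (ne_of_gt hiproc (hz i hik)).elim
  · exact ((halg.setf_branch v hav hsr).1 i hiproc).2 j hjN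


end Helpers

/-- **Catch-Up.** If job `i` is processed at time `u'` and
`j, i ∈ N(u')`, then `y_j(u'') ≥ y_i(u'')` for all `u'' ≥ u'` with
`j, i ∈ N(u'')`. -/
theorem stmt3 {J : Type*} [Fintype J] {r p : J → ℝ} {α : ℝ} {σ : ℝ → J → ℝ}
    (hinst : IsInstance r p α) (halg : IsALG r p α σ) (u' : ℝ) (i j : J)
    (hiproc : procAt σ u' i) (hjN : ncAt r p α σ u' j) (hiN : ncAt r p α σ u' i) :
    ∀ u'' : ℝ, u' ≤ u'' → ncAt r p α σ u'' j → ncAt r p α σ u'' i →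
      workDone σ i u'' ≤ workDone σ j u'' := by
  intro u'' hle hjN'' hiN''
  have hs := halg.sched
  have hNCi : ∀ v ∈ Icc u' u'', ncAt r p α σ v i := by
    intro v hv
    exact ⟨⟨hiN.1.1.trans hv.1, lt_of_le_of_lt (EReal.coe_le_coe_iff.mpr hv.2) hiN''.1.2⟩,
      (workDone_mono hs i hv.2).trans hiN''.2⟩
  have hNCj : ∀ v ∈ Icc u' u'', ncAt r p α σ v j := by
    intro v hv
    exact ⟨⟨hjN.1.1.trans hv.1, lt_of_le_of_lt (EReal.coe_le_coe_iff.mpr hv.2) hjN''.1.2⟩,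
      (workDone_mono hs j hv.2).trans hjN''.2⟩
  by_contra hcon
  push_neg at hcon
  set S : Set ℝ := Icc u' u'' ∩ {u | 0 ≤ workDone σ j u - workDone σ i u} with hS
  have hSclosed : IsClosed S := isClosed_Icc.inter (isClosed_le continuous_const
    ((workDone_cont hs j).sub (workDone_cont hs i)))
  have hSne : S.Nonempty := ⟨u', ⟨le_refl _, hle⟩, sub_nonneg.mpr (key halg hiproc hjN hiN)⟩
  have hSbdd : BddAbove S := ⟨u'', fun x hx => hx.1.2⟩
  set s := sSup S with hsdef
  have hsS : s ∈ S := hSclosed.csSup_mem hSne hSbdd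
  have hs'' : s ≤ u'' := hsS.1.2
  have hzero : ∀ v ∈ Ioo s u'', σ v i = 0 := by
    intro v hv
    by_contra hnz
    have hproc : procAt σ v i := lt_of_le_of_ne (hs.nonneg v i) (Ne.symm hnz)
    have hvI : v ∈ Icc u' u'' := ⟨hsS.1.1.trans hv.1.le, hv.2.le⟩
    have hk := key halg hproc (hNCj v hvI) (hNCi v hvI)
    exact absurd (le_csSup hSbdd ⟨hvI, sub_nonneg.mpr hk⟩) (not_le.mpr hv.1)
  have hint : workDone σ i u'' - workDone σ i s = 0 := by
    rw [workDone_sub hs i s u'', intervalIntegral.integral_of_le hs'',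
      MeasureTheory.integral_Ioc_eq_integral_Ioo]
    exact MeasureTheory.setIntegral_eq_zero_of_forall_eq_zero hzero
  have h2 : workDone σ i s ≤ workDone σ j s := sub_nonneg.mp hsS.2
  have h3 : workDone σ j s ≤ workDone σ j u'' := workDone_mono hs j hs''
  linarith
end

section
/- Let σ be any schedule and t ≥ 0 a reference time. Let j_1, …, j_m be a path in the borrow graph G_B (each consecutive pair joined by an E_N- or E_C-edge), and assume r j_a ≤ t for every a. Then ⋃_{a=1}^m I_{j_a} = [min_{1≤a≤m} r j_a, max_{1≤a≤m} min(C_{j_a}, t)]. -/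
open MeasureTheory Set

open scoped Classical

section auxlem

variable {J : Type*} [Fintype J] {r p : J → ℝ} {α : ℝ} {σ : ℝ → J → ℝ}

lemma workDone_lt_of_lt_release (hinst : IsInstance r p α) (hs : IsSchedule r p σ)
    {j : J} {v : ℝ} (hv : v < r j) : workDone σ j v < p j := by
  have hp := hinst.p_pos j
  rcases le_or_gt v 0 with h0 | h0
  · have : workDone σ j v ≤ 0 := by
      rw [workDone, intervalIntegral.integral_symm]
      have : 0 ≤ ∫ u in v..(0:ℝ), σ u j :=
        intervalIntegral.integral_nonneg h0 (fun u _ => hs.nonneg u j)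
      linarith
    linarith
  · have : workDone σ j v = 0 := by
      rw [workDone]
      have : Set.EqOn (fun u => σ u j) (fun _ => (0:ℝ)) (Set.uIcc 0 v) := by
        intro u hu
        rw [Set.uIcc_of_le h0.le] at hu
        exact hs.zero_before_release u j (lt_of_le_of_lt hu.2 hv)
      rw [intervalIntegral.integral_congr this]
      simp
    linarith

lemma coe_release_le_cTime (hinst : IsInstance r p α) (hs : IsSchedule r p σ)
    (j : J) : (r j : EReal) ≤ cTime p σ j := by
  apply le_sInf
  rintro b ⟨v, hv, rfl⟩
  rw [EReal.coe_le_coe_iff]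
  by_contra h
  exact absurd hv (ne_of_lt (workDone_lt_of_lt_release hinst hs (not_le.mp h)))

lemma min_cTime_ne_top {t : ℝ} (j : J) :
    min (cTime p σ j) (t : EReal) ≠ ⊤ :=
  ne_top_of_le_ne_top (EReal.coe_ne_top t) (min_le_right _ _)

lemma lifeEnd_le (hinst : IsInstance r p α) (hs : IsSchedule r p σ) {t : ℝ} (j : J) :
    lifeEnd p σ t j ≤ t := by
  have h1 : min (cTime p σ j) (t : EReal) ≤ (t : EReal) := min_le_right _ _
  have h2 : (⊥ : EReal) < min (cTime p σ j) (t : EReal) :=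
    lt_min ((EReal.bot_lt_coe (r j)).trans_le (coe_release_le_cTime hinst hs j))
      (EReal.bot_lt_coe t)
  have := EReal.toReal_le_toReal h1 (ne_of_gt h2) (by simp)
  simpa [lifeEnd] using this

lemma release_le_lifeEnd (hinst : IsInstance r p α) (hs : IsSchedule r p σ)
    {t : ℝ} (j : J) (hjt : r j ≤ t) : r j ≤ lifeEnd p σ t j := by
  have h1 : (r j : EReal) ≤ min (cTime p σ j) (t : EReal) :=
    le_min (coe_release_le_cTime hinst hs j) (by exact_mod_cast hjt)
  have := EReal.toReal_le_toReal h1 (by simp) (min_cTime_ne_top j)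
  simpa [lifeEnd] using this

lemma mem_lifetime_of_avail (hinst : IsInstance r p α) (hs : IsSchedule r p σ)
    {t u : ℝ} {i : J} (hav : availAt r p σ u i) (hut : u ≤ t) :
    u ∈ lifetime r p σ t i := by
  refine ⟨hav.1, ?_⟩
  have h1 : (u : EReal) ≤ min (cTime p σ i) (t : EReal) :=
    le_min hav.2.le (by exact_mod_cast hut)
  have := EReal.toReal_le_toReal h1 (by simp) (min_cTime_ne_top i)
  simpa [lifeEnd] using this

lemma borrowEdge_overlap (hinst : IsInstance r p α) (hs : IsSchedule r p σ)
    {t : ℝ} {j i : J} (h : borrowEdge r p α σ t j i) :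
    ∃ u, u ∈ lifetime r p σ t j ∧ u ∈ lifetime r p σ t i := by
  obtain ⟨u, hu, _, hav, _⟩ | ⟨u, hu, _, hav, _⟩ := h <;>
  · refine ⟨u, hu, mem_lifetime_of_avail hinst hs hav ?_⟩
    exact hu.2.trans (lifeEnd_le hinst hs j)

end auxlem

/-- For any schedule and any path `P 0, …, P m` in the borrow
graph whose jobs all release before `t`, the union of the lifetimes along the
path is the interval `[min_a r (P a), max_a min (C_{P a}, t)]`. -/
theorem stmt5 {J : Type*} [Fintype J] {r p : J → ℝ} {α : ℝ} {σ : ℝ → J → ℝ}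
    (hinst : IsInstance r p α) (hs : IsSchedule r p σ) (t : ℝ) (ht : 0 ≤ t)
    (m : ℕ) (P : Fin (m + 1) → J)
    (hpath : ∀ a : Fin m, borrowEdge r p α σ t (P a.castSucc) (P a.succ))
    (hrel : ∀ a, r (P a) ≤ t) :
    (⋃ a, lifetime r p σ t (P a)) =
      Set.Icc (⨅ a, r (P a)) (⨆ a, lifeEnd p σ t (P a)) := by
  have hne : ∀ a, r (P a) ≤ lifeEnd p σ t (P a) :=
    fun a => release_le_lifeEnd hinst hs (P a) (hrel a)
  apply Set.Subset.antisymm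
  · refine Set.iUnion_subset fun a x hx => ?_
    exact ⟨le_trans (ciInf_le (Set.finite_range _).bddBelow a) hx.1,
      le_trans hx.2 (le_ciSup (f := fun a => lifeEnd p σ t (P a)) (Set.finite_range _).bddAbove a)⟩
  · rintro x ⟨hx1, hx2⟩
    by_contra hx
    simp only [Set.mem_iUnion, lifetime, Set.mem_Icc, not_exists] at hx
    have hdich : ∀ a, x < r (P a) ∨ lifeEnd p σ t (P a) < x := by
      intro a
      rcases lt_or_ge x (r (P a)) with h | h
      · exact Or.inl h
      · exact Or.inr (lt_of_not_ge fun h2 => hx a ⟨h, h2⟩)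
    have hconst : ∀ a : Fin m,
        (lifeEnd p σ t (P a.castSucc) < x ↔ lifeEnd p σ t (P a.succ) < x) := by
      intro a
      obtain ⟨u, ⟨hu1, hu2⟩, hu3, hu4⟩ := borrowEdge_overlap hinst hs (hpath a)
      constructor
      · intro h
        rcases hdich a.succ with h2 | h2
        · exact absurd (hu3.trans (hu2.trans h.le)) (not_le.mpr h2)
        · exact h2
      · intro h
        rcases hdich a.castSucc with h2 | h2
        · exact absurd (hu1.trans (hu4.trans h.le)) (not_le.mpr h2)
        · exact h2
    have key : ∀ n (h : n < m + 1),
        (lifeEnd p σ t (P ⟨n, h⟩) < x ↔ lifeEnd p σ t (P ⟨0, Nat.succ_pos m⟩) < x) := by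
      intro n
      induction n with
      | zero => intro h; rfl
      | succ n ih =>
        intro h
        have hn : n < m := by omega
        have e1 : (⟨n, hn⟩ : Fin m).castSucc = ⟨n, by omega⟩ := rfl
        have e2 : (⟨n, hn⟩ : Fin m).succ = ⟨n + 1, h⟩ := rfl
        have := hconst ⟨n, hn⟩
        rw [e1, e2] at this
        exact this.symm.trans (ih (by omega))
    obtain ⟨a0, ha0⟩ := Finite.exists_min fun a => r (P a)
    obtain ⟨a1, ha1⟩ := Finite.exists_max fun a => lifeEnd p σ t (P a)
    have hRa0 : r (P a0) ≤ x := le_trans (le_ciInf ha0) hx1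
    have hEa1 : x ≤ lifeEnd p σ t (P a1) := le_trans hx2 (ciSup_le ha1)
    have hL0 : lifeEnd p σ t (P a0) < x := by
      rcases hdich a0 with h | h
      · exact absurd hRa0 (not_le.mpr h)
      · exact h
    have k0 := key a0.1 a0.isLt
    have k1 := key a1.1 a1.isLt
    rw [Fin.eta] at k0 k1
    exact absurd (k1.mpr (k0.mp hL0)) (not_lt.mpr hEa1)
end
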